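/- In type Dₙ with n ≥ 5 odd, a dominant coweight μ with ω₁^∨ ≤ μ satisfies μ ≱ ω₁^∨ + ω₂^∨ if and only if μ ≤ 2ω_{n-1}^∨ or μ ≤ 2ωₙ^∨. -/
import Mathlib


/-- The simple coroots of type `Dₙ` in `ℤⁿ`: `αᵢ^∨ = eᵢ - eᵢ₊₁` for `i ≤ n-1` and
`αₙ^∨ = e_{n-1} + eₙ` (indices `i : Fin n` are 0-based). -/
def Dcoroot (n : ℕ) (i : Fin n) : Fin n → ℤ :=
  fun j => if i.val = n - 1 then (if j.val = n - 2 ∨ j.val = n - 1 then 1 else 0)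
    else if j.val = i.val then 1 else if j.val = i.val + 1 then -1 else 0

/-- The fundamental coweight `ωₘ^∨ = e₁ + ⋯ + eₘ` of type `Dₙ` for `m ≤ n - 2`. -/
def Domega (n m : ℕ) : Fin n → ℤ := fun j => if j.val < m then 1 else 0

/-- Dominance order: `μ - λ` is a nonnegative integer combination of simple coroots. -/
def DdomLE (n : ℕ) (lam mu : Fin n → ℤ) : Prop :=
  ∃ c : Fin n → ℕ, mu - lam = ∑ i, (c i : ℤ) • Dcoroot n i

/-- Dominant coweights of type `Dₙ`: `μ₁ ≥ ⋯ ≥ μₙ` and `μ_{n-1} + μₙ ≥ 0`. -/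
def Ddominant (n : ℕ) (mu : Fin n → ℤ) : Prop :=
  Antitone mu ∧ ∀ i j : Fin n, i.val = n - 2 → j.val = n - 1 → 0 ≤ mu i + mu j

def nfun {α : Type*} [Zero α] (n : ℕ) (f : Fin n → α) : ℕ → α :=
  fun k => if h : k < n then f ⟨k, h⟩ else 0

lemma nfun_eq {α : Type*} [Zero α] (n : ℕ) (f : Fin n → α) (k : ℕ) (h : k < n) :
    nfun n f k = f ⟨k, h⟩ := dif_pos h

lemma dcoroot_decomp (n : ℕ) (hn : 5 ≤ n) (i j : Fin n) :
    Dcoroot n i j =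
      (if i = j ∧ j.val ≠ n - 1 then (1:ℤ) else 0)
      + ((if i = ⟨j.val - 1, lt_of_le_of_lt (Nat.sub_le _ _) j.isLt⟩ ∧ j.val ≠ 0 then (-1:ℤ) else 0)
      + (if i = ⟨n - 1, by omega⟩ ∧ (j.val = n - 2 ∨ j.val = n - 1) then (1:ℤ) else 0)) := by
  have hi := i.isLt
  have hj := j.isLt
  unfold Dcoroot
  simp only [Fin.ext_iff]
  split_ifs <;> omega

lemma sum_eval (n : ℕ) (hn : 5 ≤ n) (c : Fin n → ℤ) (j : Fin n) :
    (∑ i, c i • Dcoroot n i) j =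
      (if j.val = n - 1 then 0 else c j)
      - (if j.val = 0 then 0 else c ⟨j.val - 1, lt_of_le_of_lt (Nat.sub_le _ _) j.isLt⟩)
      + (if j.val = n - 2 ∨ j.val = n - 1 then c ⟨n - 1, by omega⟩ else 0) := by
  have hj := j.isLt
  rw [Finset.sum_apply]
  simp only [Pi.smul_apply, smul_eq_mul]
  rw [Finset.sum_congr rfl (fun i _ => by rw [dcoroot_decomp n hn i j])]
  simp only [mul_add, Finset.sum_add_distrib, mul_ite, mul_one, mul_neg_one, mul_zero, ite_and]
  rw [Finset.sum_ite_eq' Finset.univ j, Finset.sum_ite_eq' Finset.univ, Finset.sum_ite_eq' Finset.univ]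
  simp only [Finset.mem_univ, if_true]
  split_ifs <;> first | ring1 | omega

lemma ddomLE_iff (n : ℕ) (hn : 5 ≤ n) (lam mu : Fin n → ℤ) :
    DdomLE n lam mu ↔ ∃ c : Fin n → ℕ, ∀ j : Fin n,
      mu j - lam j =
        (if j.val = n - 1 then 0 else (c j : ℤ))
        - (if j.val = 0 then 0 else (c ⟨j.val - 1, lt_of_le_of_lt (Nat.sub_le _ _) j.isLt⟩ : ℤ))
        + (if j.val = n - 2 ∨ j.val = n - 1 then (c ⟨n - 1, by omega⟩ : ℤ) else 0) := by
  constructor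
  · rintro ⟨c, hc⟩
    refine ⟨c, fun j => ?_⟩
    have h := congrFun hc j
    rw [Pi.sub_apply] at h
    rw [show mu j - lam j = (∑ i, ((c i : ℤ)) • Dcoroot n i) j from h,
      sum_eval n hn (fun i => (c i : ℤ)) j]
  · rintro ⟨c, hc⟩
    refine ⟨c, funext fun j => ?_⟩
    rw [Pi.sub_apply, hc j, sum_eval n hn (fun i => (c i : ℤ)) j]

set_option maxHeartbeats 4000000 in
/-- in type `Dₙ` with `n ≥ 5` odd, a dominant coweight `μ` with
`μ - ω₁^∨` in the coroot lattice and `ω₁^∨ ≤ μ` satisfies `μ ≱ ω₁^∨ + ω₂^∨` iff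
`μ ≤ 2ω_{n-1}^∨ = (1,…,1,-1)` or `μ ≤ 2ωₙ^∨ = (1,…,1)`. -/
theorem stmt9 (n : ℕ) (hn : 5 ≤ n) (hodd : Odd n) (mu : Fin n → ℤ)
    (hdom : Ddominant n mu)
    (hlat : ∃ c : Fin n → ℤ, mu - Domega n 1 = ∑ i, c i • Dcoroot n i)
    (hge : DdomLE n (Domega n 1) mu) :
    (¬ DdomLE n (Domega n 1 + Domega n 2) mu) ↔
      (DdomLE n mu (fun j => if j.val = n - 1 then -1 else 1) ∨
       DdomLE n mu (fun _ => 1)) := by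
  clear hlat
  obtain ⟨hanti, hpair⟩ := hdom
  obtain ⟨t, ht⟩ := hodd
  rw [ddomLE_iff n hn] at hge
  obtain ⟨e, he⟩ := hge
  have hrel : ∀ k, ∀ hk : k < n,
      nfun n mu k - (if k = 0 then 1 else 0) =
        (if k = n - 1 then 0 else ((nfun n e k : ℕ) : ℤ))
        - (if k = 0 then 0 else ((nfun n e (k - 1) : ℕ) : ℤ))
        + (if k = n - 2 ∨ k = n - 1 then ((nfun n e (n - 1) : ℕ) : ℤ) else 0) := by
    intro k hk
    have h := he ⟨k, hk⟩
    simp only [Domega, Nat.lt_one_iff] at h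
    simp only [nfun, dif_pos hk, dif_pos (show k - 1 < n by omega),
      dif_pos (show n - 1 < n by omega)]
    exact h
  have r0 : nfun n mu 0 - 1 = ((nfun n e 0 : ℕ) : ℤ) := by
    have h := hrel 0 (by omega)
    rw [if_pos rfl, if_neg (show ¬(0 = n - 1) by omega), if_pos rfl,
      if_neg (show ¬(0 = n - 2 ∨ 0 = n - 1) by omega)] at h
    omega
  have rmid : ∀ k, 1 ≤ k → k ≤ n - 3 → nfun n mu k = ((nfun n e k : ℕ) : ℤ) - ((nfun n e (k - 1) : ℕ) : ℤ) := by
    intro k h1 h2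
    have h := hrel k (by omega)
    have c1 : ¬(k = 0) := by omega
    rw [if_neg c1, if_neg (show ¬(k = n - 1) by omega), if_neg c1,
      if_neg (show ¬(k = n - 2 ∨ k = n - 1) by omega)] at h
    omega
  have rn2 : nfun n mu (n - 2) =
      ((nfun n e (n - 2) : ℕ) : ℤ) - ((nfun n e (n - 3) : ℕ) : ℤ) + ((nfun n e (n - 1) : ℕ) : ℤ) := by
    have h := hrel (n - 2) (by omega)
    have c1 : ¬(n - 2 = 0) := by omega
    rw [if_neg c1, if_neg (show ¬(n - 2 = n - 1) by omega), if_neg c1,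
      if_pos (Or.inl rfl : n - 2 = n - 2 ∨ n - 2 = n - 1),
      show n - 2 - 1 = n - 3 by omega] at h
    omega
  have rn1 : nfun n mu (n - 1) = ((nfun n e (n - 1) : ℕ) : ℤ) - ((nfun n e (n - 2) : ℕ) : ℤ) := by
    have h := hrel (n - 1) (by omega)
    have c1 : ¬(n - 1 = 0) := by omega
    rw [if_neg c1, if_pos rfl, if_neg c1,
      if_pos (Or.inr rfl : n - 1 = n - 2 ∨ n - 1 = n - 1),
      show n - 1 - 1 = n - 2 by omega] at h
    omega
  have hmono : ∀ k l, k ≤ l → ∀ hl : l < n, nfun n mu l ≤ nfun n mu k := by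
    intro k l hkl hl
    rw [nfun_eq n mu l hl, nfun_eq n mu k (by omega)]
    exact hanti (show (⟨k, by omega⟩ : Fin n) ≤ ⟨l, hl⟩ from hkl)
  have hpr : 0 ≤ nfun n mu (n - 2) + nfun n mu (n - 1) := by
    rw [nfun_eq n mu (n - 2) (by omega), nfun_eq n mu (n - 1) (by omega)]
    exact hpair ⟨n - 2, by omega⟩ ⟨n - 1, by omega⟩ rfl rfl
  have hn2n1 : nfun n mu (n - 1) ≤ nfun n mu (n - 2) := hmono _ _ (by omega) (by omega)
  have hnn : ∀ k, k ≤ n - 2 → 0 ≤ nfun n mu k := by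
    intro k hk
    have := hmono k (n - 2) hk (by omega); omega
  have hmuj : ∀ j : Fin n, mu j = nfun n mu j.val := fun j => (nfun_eq n mu j.val j.isLt).symm
  constructor
  · intro hA
    by_cases hmu0 : 2 ≤ nfun n mu 0
    · exfalso; apply hA
      have he0 : 1 ≤ nfun n e 0 := by omega
      have hemid : ∀ k, 1 ≤ k → k ≤ n - 3 → 2 ≤ nfun n e k := by
        by_cases h1 : 1 ≤ nfun n mu 1
        · intro k
          induction k with
          | zero => omega
          | succ m ih =>
            intro _ hle
            rcases Nat.eq_zero_or_pos m with rfl | hm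
            · have h2 := rmid 1 (by omega) (by omega)
              simp only [show (1:ℕ) - 1 = 0 from rfl] at h2
              show 2 ≤ nfun n e 1
              omega
            · have h2 := rmid (m + 1) (by omega) hle
              simp only [Nat.add_sub_cancel] at h2
              have h3 := ih (by omega) (by omega)
              have h4 := hnn (m + 1) (by omega)
              omega
        · have hm1 : nfun n mu 1 = 0 := by have := hnn 1 (by omega); omega
          have hconst : ∀ k, k ≤ n - 3 → nfun n e k = nfun n e 0 := by
            intro k
            induction k with
            | zero => intro _; rfl
            | succ m ih =>
              intro hle
              have h2 := rmid (m + 1) (by omega) hle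
              simp only [Nat.add_sub_cancel] at h2
              have h3 : nfun n mu (m + 1) = 0 := by
                have := hnn (m + 1) (by omega)
                have := hmono 1 (m + 1) (by omega) (by omega)
                omega
              have := ih (by omega)
              omega
          have hmn2 : nfun n mu (n - 2) = 0 := by
            have := hmono 1 (n - 2) (by omega) (by omega)
            have := hnn (n - 2) le_rfl
            omega
          have hmn1 : nfun n mu (n - 1) = 0 := by
            have := hmono 1 (n - 1) (by omega) (by omega)
            omega
          intro k hk1 hk3
          have hc1 := hconst k hk3
          have hc2 := hconst (n - 3) le_rfl
          omega
      have he3 := hemid (n - 3) (by omega) le_rfl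
      have hen2 : 1 ≤ nfun n e (n - 2) := by omega
      have hen1 : 1 ≤ nfun n e (n - 1) := by omega
      rw [ddomLE_iff n hn]
      refine ⟨fun i => nfun n e i.val - (if i.val = 0 then 1 else if i.val ≤ n - 3 then 2 else 1), ?_⟩
      have key : ∀ k, ∀ hk : k < n,
          mu ⟨k, hk⟩ - (Domega n 1 + Domega n 2) ⟨k, hk⟩ =
            (if k = n - 1 then 0 else
              ((nfun n e k - (if k = 0 then 1 else if k ≤ n - 3 then 2 else 1) : ℕ) : ℤ))
            - (if k = 0 then 0 else
              ((nfun n e (k - 1) - (if k - 1 = 0 then 1 else if k - 1 ≤ n - 3 then 2 else 1) : ℕ) : ℤ))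
            + (if k = n - 2 ∨ k = n - 1 then
              ((nfun n e (n - 1) - (if n - 1 = 0 then 1 else if n - 1 ≤ n - 3 then 2 else 1) : ℕ) : ℤ)
              else 0) := by
        intro k hk
        simp only [Pi.add_apply, Domega]
        rw [← nfun_eq n mu k hk,
          if_neg (show ¬(n - 1 = 0) by omega), if_neg (show ¬(n - 1 ≤ n - 3) by omega)]
        rcases (show k = 0 ∨ (2 ≤ k ∧ k ≤ n - 3) ∨ k = 1 ∨ k = n - 2 ∨ k = n - 1 by omega) with
          rfl | ⟨hk1, hk2⟩ | rfl | rfl | rfl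
        · split_ifs <;> omega
        · have ha := rmid k (by omega) hk2
          have hb := hemid k (by omega) hk2
          have hc' := hemid (k - 1) (by omega) (by omega)
          split_ifs <;> omega
        · have ha := rmid 1 (by omega) (by omega)
          simp only [show (1:ℕ) - 1 = 0 from rfl] at ha ⊢
          have hb := hemid 1 (by omega) (by omega)
          split_ifs <;> first | omega | exact (by assumption : False).elim
        · rw [if_pos (Or.inl rfl : n - 2 = n - 2 ∨ n - 2 = n - 1)]
          simp only [show n - 2 - 1 = n - 3 by omega]
          split_ifs <;> omega
        · rw [if_pos (Or.inr rfl : n - 1 = n - 2 ∨ n - 1 = n - 1)]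
          simp only [show n - 1 - 1 = n - 2 by omega]
          split_ifs <;> omega
      exact fun j => key j.val j.isLt
    · have hmu01 : nfun n mu 0 = 1 := by omega
      by_cases hlast : nfun n mu (n - 1) = -1
      · left
        have hall : ∀ k, k ≤ n - 2 → nfun n mu k = 1 := by
          intro k hk
          have h0 := hmono 0 (n - 2) (by omega) (by omega)
          have h1 := hmono 0 k (by omega) (by omega)
          have h2 := hmono k (n - 2) hk (by omega)
          omega
        rw [ddomLE_iff n hn]
        refine ⟨fun _ => 0, fun j => ?_⟩
        have hjlt := j.isLt
        rw [hmuj j]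
        simp only []
        rcases (show j.val = n - 1 ∨ j.val ≤ n - 2 by omega) with h | h
        · rw [h, if_pos rfl, if_pos rfl, if_neg (show ¬(n - 1 = 0) by omega),
            if_pos (Or.inr rfl : n - 1 = n - 2 ∨ n - 1 = n - 1)]
          omega
        · have h2 := hall j.val h
          split_ifs <;> omega
      · right
        have hb1 : 0 ≤ nfun n mu (n - 1) := by
          have := hmono 0 (n - 2) (by omega) (by omega)
          omega
        have hb2 : nfun n mu (n - 1) ≤ 1 := by
          have := hmono 0 (n - 1) (by omega) (by omega); omega
        have hex : ∃ m, nfun n mu m ≠ 1 := ⟨n, by simp [nfun]⟩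
        set K := Nat.find hex with hKdef
        have hKspec : nfun n mu K ≠ 1 := Nat.find_spec hex
        have hKmin : ∀ m, m < K → nfun n mu m = 1 := fun m hm => not_not.mp (Nat.find_min hex hm)
        have hK1 : 1 ≤ K := by
          rcases Nat.eq_zero_or_pos K with h0 | h
          · rw [h0] at hKspec; exact absurd hmu01 hKspec
          · exact h
        have hKn : K ≤ n := Nat.find_le (by simp [nfun])
        have hKval : K < n → nfun n mu K = 0 := by
          intro hk
          rcases (show K ≤ n - 2 ∨ K = n - 1 by omega) with h | h
          · have := hnn K h
            have := hmono 0 K (by omega) (by omega)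
            omega
          · rw [h] at hKspec ⊢
            omega
        have hform : ∀ m, m < n → nfun n mu m = (if m < K then 1 else 0) := by
          intro m hm
          by_cases h : m < K
          · rw [if_pos h]; exact hKmin m h
          · rw [if_neg h]
            have h2 := hKval (by omega)
            have h3 := hmono K m (by omega) hm
            rcases (show m ≤ n - 2 ∨ m = n - 1 by omega) with h4 | h4
            · have := hnn m h4; omega
            · rw [h4] at h3 ⊢
              omega
        have hind : ∀ m, m ≤ n - 3 → ((nfun n e m : ℕ) : ℤ) = ((min (m + 1) K : ℕ) : ℤ) - 1 := by
          intro m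
          induction m with
          | zero => intro _; omega
          | succ m ih =>
            intro h
            have h2 := rmid (m + 1) (by omega) h
            simp only [Nat.add_sub_cancel] at h2
            have h3 := hform (m + 1) (by omega)
            have h4 := ih (by omega)
            split_ifs at h3 <;> omega
        have hKpar : K % 2 = 1 ∧ (K ≤ n - 2 ∨ K = n) := by
          have h4 := hform (n - 2) (by omega)
          have h5 := hform (n - 1) (by omega)
          have h6 := hind (n - 3) (by omega)
          split_ifs at h4 h5 <;> omega
        rw [ddomLE_iff n hn]
        refine ⟨fun i => if i.val = n - 1 then (n - K) / 2
          else if i.val = n - 2 then (n - K) / 2 - 1 else i.val + 1 - K, fun j => ?_⟩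
        obtain ⟨k, hk⟩ := j
        have hf := hform k hk
        rw [hmuj ⟨k, hk⟩]
        simp only [Fin.val_mk]
        rw [if_pos trivial]
        rcases (show k = 0 ∨ (1 ≤ k ∧ k ≤ n - 3) ∨ k = n - 2 ∨ k = n - 1 by omega) with
          rfl | ⟨h1, h2⟩ | rfl | rfl
        · rw [if_neg (show ¬((0:ℕ) = n - 1) by omega), if_neg (show ¬((0:ℕ) = n - 1) by omega),
            if_neg (show ¬((0:ℕ) = n - 2) by omega), if_pos (rfl : (0:ℕ) = 0),
            if_neg (show ¬((0:ℕ) = n - 2 ∨ (0:ℕ) = n - 1) by omega)]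
          split_ifs at hf <;> omega
        · rw [if_neg (show ¬(k = n - 1) by omega), if_neg (show ¬(k = n - 1) by omega),
            if_neg (show ¬(k = n - 2) by omega), if_neg (show ¬(k = 0) by omega),
            if_neg (show ¬(k - 1 = n - 1) by omega), if_neg (show ¬(k - 1 = n - 2) by omega),
            if_neg (show ¬(k = n - 2 ∨ k = n - 1) by omega)]
          split_ifs at hf <;> omega
        · rw [if_neg (show ¬(n - 2 = n - 1) by omega), if_neg (show ¬(n - 2 = n - 1) by omega),
            if_pos (rfl : n - 2 = n - 2), if_neg (show ¬(n - 2 = 0) by omega),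
            show n - 2 - 1 = n - 3 by omega,
            if_neg (show ¬(n - 3 = n - 1) by omega), if_neg (show ¬(n - 3 = n - 2) by omega),
            if_pos (Or.inl rfl : n - 2 = n - 2 ∨ n - 2 = n - 1)]
          split_ifs at hf <;> omega
        · rw [if_pos (rfl : n - 1 = n - 1), if_neg (show ¬(n - 1 = 0) by omega),
            show n - 1 - 1 = n - 2 by omega,
            if_neg (show ¬(n - 2 = n - 1) by omega), if_pos (rfl : n - 2 = n - 2),
            if_pos (Or.inr rfl : n - 1 = n - 2 ∨ n - 1 = n - 1)]
          split_ifs at hf <;> omega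
  · rintro hBC hA
    rw [ddomLE_iff n hn] at hA
    obtain ⟨c, hc⟩ := hA
    have h0 := hc ⟨0, by omega⟩
    simp only [Pi.add_apply, Domega] at h0
    have hub : mu ⟨0, by omega⟩ ≤ 1 := by
      rcases hBC with hB | hB <;>
      · rw [ddomLE_iff n hn] at hB
        obtain ⟨c', hc'⟩ := hB
        have h1 := hc' ⟨0, by omega⟩
        simp only at h1
        split_ifs at h1 <;> omega
    split_ifs at h0 <;> omega
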